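/- Let 𝕏 = {(x, y) ∈ ℝ² : |y| ≤ |sin x|} with the subspace topology, and let f : 𝕏 → ℝ be the projection f(x, y) = x. Then f is a continuous, open, surjective map. -/

import Mathlib

/-- The space `𝕏 = {(x, y) ∈ ℝ² : |y| ≤ |sin x|}` with the subspace topology. -/
def BraidSpace : Type := {p : ℝ × ℝ // |p.2| ≤ |Real.sin p.1|}

instance : TopologicalSpace BraidSpace := instTopologicalSpaceSubtype

theorem projection_interior_surjective :
    Continuous (fun p : BraidSpace => p.1.1) ∧
    IsOpenMap (fun p : BraidSpace => p.1.1) ∧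
    Function.Surjective (fun p : BraidSpace => p.1.1) := by
  refine ⟨(continuous_fst.comp continuous_subtype_val), ?_, ?_⟩
  · intro U hU
    rw [isOpen_iff_mem_nhds]
    rintro x ⟨p, hpU, rfl⟩
    obtain ⟨V, hV, rfl⟩ := hU
    set y := p.1.2 with hy
    set x := p.1.1 with hx
    -- scaling path
    set g : ℝ → ℝ × ℝ := fun t => (t, (y / Real.sin x) * Real.sin t) with hg
    have hratio : |y| / |Real.sin x| ≤ 1 := by
      rcases eq_or_ne (Real.sin x) 0 with h | h
      · have : |y| ≤ 0 := by
          have hp : |y| ≤ |Real.sin x| := p.2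
          rw [h] at hp
          simpa using hp
        simp [abs_nonpos_iff.mp this]
      · exact (div_le_one (abs_pos.mpr h)).mpr p.2
    have hmem : ∀ t, |(g t).2| ≤ |Real.sin (g t).1| := by
      intro t
      simp only [hg, abs_mul, abs_div]
      calc |y| / |Real.sin x| * |Real.sin t| ≤ 1 * |Real.sin t| := by
            exact mul_le_mul_of_nonneg_right hratio (abs_nonneg _)
        _ = |Real.sin t| := one_mul _
    have hgx : g x = p.1 := by
      rcases eq_or_ne (Real.sin x) 0 with h | h
      · have : |y| ≤ 0 := by
          have hp : |y| ≤ |Real.sin x| := p.2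
          rw [h] at hp
          simpa using hp
        have hy0 : y = 0 := abs_nonpos_iff.mp this
        simp only [hg, h, mul_zero]
        exact Prod.ext_iff.mpr ⟨rfl, hy0.symm⟩
      · simp [hg, div_mul_cancel₀ _ h]
        rfl
    have hgc : Continuous g := by
      exact continuous_id.prodMk (continuous_const.mul Real.continuous_sin)
    have hopen : IsOpen (g ⁻¹' V) := hV.preimage hgc
    have hxin : x ∈ g ⁻¹' V := by
      simp only [Set.mem_preimage, hgx]
      exact hpU
    refine Filter.mem_of_superset (hopen.mem_nhds hxin) ?_
    intro t ht
    exact ⟨⟨g t, hmem t⟩, ht, rfl⟩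
  · intro x
    exact ⟨⟨(x, 0), by simp⟩, rfl⟩
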